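/- Let L be an invertible module over a commutative ring A and u : L → A an A-linear map. Then for all x, y ∈ L one has u(x)·y = u(y)·x. -/

import Mathlib

open TensorProduct

/-- In a free module of rank one, `v a • b = v b • a` for any functional `v`. -/
lemma aux_rank_one {R N : Type*} [CommRing R] [Nontrivial R] [AddCommGroup N] [Module R N]
    [Module.Free R N] [Module.Finite R N] (h : Module.finrank R N = 1)
    (v : N →ₗ[R] R) (a b : N) : v a • b = v b • a := by
  have hcard : Fintype.card (Module.Free.ChooseBasisIndex R N) = 1 := by
    rw [← Module.finrank_eq_card_chooseBasisIndex, h]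
  let c : Module.Basis (Fin 1) R N := (Module.Free.chooseBasis R N).reindex
    (Fintype.equivFinOfCardEq hcard)
  have ha : a = c.repr a 0 • c 0 := by
    conv_lhs => rw [← c.sum_repr a]
    simp [Fin.sum_univ_one]
  have hb : b = c.repr b 0 • c 0 := by
    conv_lhs => rw [← c.sum_repr b]
    simp [Fin.sum_univ_one]
  rw [ha, hb]
  simp only [map_smul, smul_smul, smul_eq_mul]
  ring_nf

theorem stmt_16 (A : Type*) [CommRing A] (L : Type*) [AddCommGroup L] [Module A L]
    [Module.Finite A L] [Module.Projective A L]
    (hrank : ∀ (p : Ideal A), p.IsPrime →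
      Module.finrank (FractionRing (A ⧸ p)) ((FractionRing (A ⧸ p)) ⊗[A] L) = 1)
    (u : L →ₗ[A] A) (x y : L) :
    u x • y = u y • x := by
  apply Module.eq_of_localization_maximal
    (fun (P : Ideal A) [P.IsMaximal] => LocalizedModule P.primeCompl L)
    (fun (P : Ideal A) [P.IsMaximal] => LocalizedModule.mkLinearMap P.primeCompl L)
  intro P hP
  set Aₚ := Localization.AtPrime P
  set Lₚ := LocalizedModule P.primeCompl L
  letI : Field (A ⧸ P) := Ideal.Quotient.field P
  set κ := FractionRing (A ⧸ P)
  -- Lₚ is finite free over Aₚ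
  haveI : Module.Finite Aₚ Lₚ :=
    Module.Finite.of_isLocalizedModule P.primeCompl
      (LocalizedModule.mkLinearMap P.primeCompl L)
  haveI : Module.Projective Aₚ Lₚ :=
    Module.projective_of_isLocalizedModule P.primeCompl
      (LocalizedModule.mkLinearMap P.primeCompl L)
  haveI : Module.Free Aₚ Lₚ := by
    haveI : Module.FinitePresentation Aₚ Lₚ := Module.finitePresentation_of_projective _ _
    exact Module.free_of_flat_of_isLocalRing
  -- κ is an Aₚ-algebra
  have hunit : ∀ s : P.primeCompl, IsUnit (algebraMap A κ s) := by
    intro s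
    rw [IsScalarTower.algebraMap_apply A (A ⧸ P) κ]
    apply IsUnit.map
    apply isUnit_iff_ne_zero.mpr
    intro h0
    exact s.2 (Ideal.Quotient.eq_zero_iff_mem.mp (by simpa using h0))
  letI : Algebra Aₚ κ := (IsLocalization.lift (S := Aₚ) hunit).toAlgebra
  haveI : IsScalarTower A Aₚ κ := IsScalarTower.of_algebraMap_eq
    (fun a => (IsLocalization.lift_eq (S := Aₚ) hunit a).symm)
  -- rank computation
  have hone : Module.finrank Aₚ Lₚ = 1 := by
    have e1 : κ ⊗[Aₚ] (Aₚ ⊗[A] L) ≃ₗ[κ] κ ⊗[A] L :=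
      AlgebraTensorModule.cancelBaseChange A Aₚ κ κ L
    have e2 : κ ⊗[Aₚ] (Aₚ ⊗[A] L) ≃ₗ[κ] κ ⊗[Aₚ] Lₚ :=
      AlgebraTensorModule.congr (LinearEquiv.refl κ κ)
        (IsLocalizedModule.isBaseChange P.primeCompl Aₚ
          (LocalizedModule.mkLinearMap P.primeCompl L)).equiv
    have h1 : Module.finrank κ (κ ⊗[A] L) = 1 := hrank P hP.isPrime
    rw [(e1.symm.trans e2).finrank_eq, Module.finrank_baseChange] at h1
    exact h1
  -- the localized functional
  let uₚ : Lₚ →ₗ[Aₚ] Aₚ :=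
    IsLocalizedModule.mapExtendScalars P.primeCompl
      (LocalizedModule.mkLinearMap P.primeCompl L) (Algebra.linearMap A Aₚ) Aₚ u
  have huₚ : ∀ z : L, uₚ (LocalizedModule.mkLinearMap P.primeCompl L z)
      = algebraMap A Aₚ (u z) := by
    intro z
    have hz : LocalizedModule.mk z (1 : P.primeCompl)
        = LocalizedModule.mkLinearMap P.primeCompl L z := rfl
    show (IsLocalizedModule.map P.primeCompl (LocalizedModule.mkLinearMap P.primeCompl L)
      (Algebra.linearMap A Aₚ)) u (LocalizedModule.mkLinearMap P.primeCompl L z) = _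
    rw [IsLocalizedModule.map_apply]
    rfl
  have key := aux_rank_one hone uₚ
    (LocalizedModule.mkLinearMap P.primeCompl L x)
    (LocalizedModule.mkLinearMap P.primeCompl L y)
  rw [huₚ, huₚ] at key
  simp only [map_smul]
  rw [← algebraMap_smul Aₚ (u x), ← algebraMap_smul Aₚ (u y)]
  exact key
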